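/- Let p ∈ ℕ with p ≥ 1, ω > 0, and θ ∈ 𝒮(p,ω). Suppose ψ ∈ ℬ𝒫𝒞(θ) is an unpredictable function with values in ℝ^m satisfying sup_{t∈ℝ} ‖ψ(t)‖ ≤ H for some H > 0, and suppose ξ ∈ ℬ𝒫𝒞(θ) satisfies ‖ξ(t)‖ → 0 as t → ∞ and ‖ξ(θ_{k₀}+)‖ > 4H for some k₀ ∈ ℤ, where ξ(θ_{k₀}+) denotes the right limit of ξ at θ_{k₀}. Then the function φ ∈ ℬ𝒫𝒞(θ) defined by φ(t) = ψ(t) + ξ(t) is asymptotically unpredictable but is NOT unpredictable; that is, there do not exist positive numbers ε₀, ν and sequences {μ_n}, {τ_n} of real numbers diverging to +∞ satisfying conditions (i)–(iii) of the definition of an unpredictable function for φ. -/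
import Mathlib


open Filter Topology

noncomputable section

/-- `𝒮(p,ω)`: strictly increasing sequences `θ : ℤ → ℝ` with `|θ k| → ∞` as `|k| → ∞`
and `θ (k+p) = θ k + ω` for all `k`. -/
def SSeq (p : ℕ) (ω : ℝ) (θ : ℤ → ℝ) : Prop :=
  StrictMono θ ∧ Tendsto (fun k : ℤ => |θ k|) (cocompact ℤ) atTop ∧
    ∀ k : ℤ, θ (k + (p : ℤ)) = θ k + ω

/-- `ℬ𝒫𝒞(θ)`: bounded, continuous on each `(θ (k-1), θ k)`, right limits exist at each
`θ k`, and left-continuous at each `θ k`. -/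
def BPC (m : ℕ) (θ : ℤ → ℝ) (φ : ℝ → EuclideanSpace ℝ (Fin m)) : Prop :=
  (∃ M : ℝ, ∀ t : ℝ, ‖φ t‖ ≤ M) ∧
  (∀ k : ℤ, ContinuousOn φ (Set.Ioo (θ (k - 1)) (θ k))) ∧
  (∀ k : ℤ, ∃ L : EuclideanSpace ℝ (Fin m), Tendsto φ (nhdsWithin (θ k) (Set.Ioi (θ k))) (nhds L)) ∧
  (∀ k : ℤ, Tendsto φ (nhdsWithin (θ k) (Set.Iio (θ k))) (nhds (φ (θ k))))

/-- Conditions (i)–(iii) of Definition 2.1 with explicit data `ε₀, ν, μ, τ`. -/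
def UnpredictableWith (m : ℕ) (θ : ℤ → ℝ) (ψ : ℝ → EuclideanSpace ℝ (Fin m))
    (ε₀ ν : ℝ) (μ τ : ℕ → ℝ) : Prop :=
  0 < ε₀ ∧ 0 < ν ∧ Tendsto μ atTop atTop ∧ Tendsto τ atTop atTop ∧
  (∀ ε > (0 : ℝ), ∃ δ > (0 : ℝ), ∀ k : ℤ, ∀ s₁ ∈ Set.Ioo (θ (k - 1)) (θ k),
    ∀ s₂ ∈ Set.Ioo (θ (k - 1)) (θ k), |s₁ - s₂| < δ → ‖ψ s₁ - ψ s₂‖ < ε) ∧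
  (∀ C : Set ℝ, IsCompact C →
    TendstoUniformlyOn (fun n t => ψ (t + μ n)) ψ atTop C) ∧
  (∀ n : ℕ, ∀ t ∈ Set.Icc (τ n - ν) (τ n + ν), ε₀ ≤ ‖ψ (t + μ n) - ψ t‖)

/-- An unpredictable function in `ℬ𝒫𝒞(θ)`. -/
def Unpredictable (m : ℕ) (θ : ℤ → ℝ) (ψ : ℝ → EuclideanSpace ℝ (Fin m)) : Prop :=
  BPC m θ ψ ∧ ∃ ε₀ ν : ℝ, ∃ μ τ : ℕ → ℝ, UnpredictableWith m θ ψ ε₀ ν μ τ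

/-- An asymptotically unpredictable function in `ℬ𝒫𝒞(θ)`. -/
def AsympUnpredictable (m : ℕ) (θ : ℤ → ℝ) (φ : ℝ → EuclideanSpace ℝ (Fin m)) : Prop :=
  BPC m θ φ ∧ ∃ ψ ξ : ℝ → EuclideanSpace ℝ (Fin m),
    Unpredictable m θ ψ ∧ BPC m θ ξ ∧
    Tendsto (fun t => ‖ξ t‖) atTop (nhds (0 : ℝ)) ∧ ∀ t : ℝ, φ t = ψ t + ξ t

/-- Lemma 2.4, second case: if `ψ ∈ ℬ𝒫𝒞(θ)` is unpredictable with
`sup ‖ψ‖ ≤ H`, and `ξ ∈ ℬ𝒫𝒞(θ)` satisfies `‖ξ t‖ → 0` as `t → ∞` and the right limit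
`ξ(θ k₀ +)` has norm `> 4H` for some `k₀`, then `φ = ψ + ξ` is asymptotically unpredictable
but not unpredictable. -/
theorem statement6 (m p : ℕ) (hp : 1 ≤ p) (ω : ℝ) (hω : 0 < ω) (θ : ℤ → ℝ)
    (hθ : SSeq p ω θ) (ψ : ℝ → EuclideanSpace ℝ (Fin m))
    (H : ℝ) (hH : 0 < H) (hbound : ∀ t : ℝ, ‖ψ t‖ ≤ H)
    (hψ : Unpredictable m θ ψ)
    (ξ : ℝ → EuclideanSpace ℝ (Fin m)) (hξBPC : BPC m θ ξ)
    (hξ0 : Tendsto (fun t => ‖ξ t‖) atTop (nhds (0 : ℝ)))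
    (k₀ : ℤ) (L : EuclideanSpace ℝ (Fin m))
    (hL : Tendsto ξ (nhdsWithin (θ k₀) (Set.Ioi (θ k₀))) (nhds L))
    (hLnorm : 4 * H < ‖L‖) :
    AsympUnpredictable m θ (fun t => ψ t + ξ t) ∧
    ¬ Unpredictable m θ (fun t => ψ t + ξ t) := by
  have hsum : BPC m θ (fun t => ψ t + ξ t) := by
    obtain ⟨⟨M1, hM1⟩, hc1, hr1, hl1⟩ := hψ.1
    obtain ⟨⟨M2, hM2⟩, hc2, hr2, hl2⟩ := hξBPC
    refine ⟨⟨M1 + M2, fun t => (norm_add_le _ _).trans (add_le_add (hM1 t) (hM2 t))⟩,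
      fun k => (hc1 k).add (hc2 k), fun k => ?_, fun k => (hl1 k).add (hl2 k)⟩
    obtain ⟨L1, h1⟩ := hr1 k
    obtain ⟨L2, h2⟩ := hr2 k
    exact ⟨L1 + L2, h1.add h2⟩
  constructor
  · exact ⟨hsum, ψ, ξ, hψ, hξBPC, hξ0, fun t => rfl⟩
  · rintro ⟨-, ε₀, ν, μ, τ, hε₀, hν, hμ, hτ, -, hunifC, -⟩
    -- pick s > θ k₀ with ‖ξ s‖ > 4H
    have hev : ∀ᶠ s in nhdsWithin (θ k₀) (Set.Ioi (θ k₀)), 4 * H < ‖ξ s‖ :=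
      hL.norm.eventually (eventually_gt_nhds hLnorm)
    obtain ⟨s, hs⟩ := hev.exists
    have huc := hunifC {s} isCompact_singleton
    rw [Metric.tendstoUniformlyOn_iff] at huc
    have h1 : ∀ᶠ n in atTop, dist (ψ s + ξ s) (ψ (s + μ n) + ξ (s + μ n)) < H := by
      filter_upwards [huc H hH] with n hn using hn s rfl
    have htend : Tendsto (fun n => s + μ n) atTop atTop :=
      tendsto_atTop_add_const_left atTop s hμ
    have h2 : ∀ᶠ n in atTop, ‖ξ (s + μ n)‖ < H :=
      (hξ0.comp htend).eventually (eventually_lt_nhds hH)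
    obtain ⟨n, hn1, hn2⟩ := (h1.and h2).exists
    have ha : 3 * H < ‖ψ s + ξ s‖ := by
      have := norm_sub_norm_le (ξ s) (-(ψ s))
      simp only [norm_neg, sub_neg_eq_add] at this
      have hb := hbound s
      rw [add_comm] at this
      linarith
    have hb : ‖ψ (s + μ n) + ξ (s + μ n)‖ ≤ 2 * H := by
      have := norm_add_le (ψ (s + μ n)) (ξ (s + μ n))
      have hb2 := hbound (s + μ n)
      linarith
    have hd : ‖ψ s + ξ s‖ - ‖ψ (s + μ n) + ξ (s + μ n)‖ ≤
        dist (ψ s + ξ s) (ψ (s + μ n) + ξ (s + μ n)) := by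
      rw [dist_eq_norm]; exact norm_sub_norm_le _ _
    linarith
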